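/- For every θ = (θ₀,θ₁,θ₂) ∈ ℝ³ with θ₀ > √(θ₁²+θ₂²), setting |θ| = √(θ₀²−θ₁²−θ₂²), one has ∫_{ℝ²} exp(−(θ₀√(1+x₁²+x₂²) − θ₁x₁ − θ₂x₂)) / √(1+x₁²+x₂²) dx₁ dx₂ = 2π e^{−|θ|} / |θ|. (Equivalently, the 2D hyperboloid density integrates to 1.) -/

import Mathlib

open MeasureTheory
open Real Set Filter


/-- positivity auxiliary -/
lemma hyp_pos_aux (A B a y : ℝ) (hA : 0 < A) (hB : B ^ 2 < A ^ 2) :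
    0 < A * Real.sqrt (1 + a ^ 2 + y ^ 2) + B * y := by
  set σ := Real.sqrt (1 + a ^ 2 + y ^ 2) with hσ
  have hσ2 : σ ^ 2 = 1 + a ^ 2 + y ^ 2 := Real.sq_sqrt (by positivity)
  have hσpos : 0 < σ := Real.sqrt_pos.2 (by positivity)
  have h2 : (B * y) ^ 2 < (A * σ) ^ 2 := by nlinarith [sq_nonneg y, sq_nonneg a, sq_nonneg B]
  have h3 : |B * y| < A * σ := by
    have := Real.sqrt_lt_sqrt (sq_nonneg _) h2
    rwa [Real.sqrt_sq_eq_abs, Real.sqrt_sq (by positivity : (0:ℝ) ≤ A * σ)] at this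
  have := neg_lt_of_abs_lt h3
  linarith

/-- key sqrt identity for boosts -/
lemma hyp_sqrt_iden (A B T a y : ℝ) (hA : 0 < A) (hB : B ^ 2 < A ^ 2) (hT : 0 < T)
    (hT2 : T ^ 2 = A ^ 2 - B ^ 2) :
    Real.sqrt (1 + a ^ 2 + ((A * y + B * Real.sqrt (1 + a ^ 2 + y ^ 2)) / T) ^ 2)
      = (A * Real.sqrt (1 + a ^ 2 + y ^ 2) + B * y) / T := by
  set σ := Real.sqrt (1 + a ^ 2 + y ^ 2) with hσ
  have hσ2 : σ ^ 2 = 1 + a ^ 2 + y ^ 2 := Real.sq_sqrt (by positivity)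
  have hpos := hyp_pos_aux A B a y hA hB
  have key : 1 + a ^ 2 + ((A * y + B * σ) / T) ^ 2 = ((A * σ + B * y) / T) ^ 2 := by
    field_simp
    linear_combination (1 + a ^ 2) * hT2 - (A ^ 2 - B ^ 2) * hσ2
  rw [key, Real.sqrt_sq (by positivity)]

lemma hyp_hasDerivAt_sqrt (a v : ℝ) :
    HasDerivAt (fun v : ℝ => Real.sqrt (1 + a ^ 2 + v ^ 2))
      (v / Real.sqrt (1 + a ^ 2 + v ^ 2)) v := by
  have h1 : HasDerivAt (fun v : ℝ => 1 + a ^ 2 + v ^ 2) (2 * v) v := by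
    simpa using (hasDerivAt_pow 2 v).const_add (1 + a ^ 2)
  have h2 := (Real.hasDerivAt_sqrt (by positivity : (1 + a ^ 2 + v ^ 2) ≠ 0)).comp v h1
  refine h2.congr_deriv ?_
  have : Real.sqrt (1 + a ^ 2 + v ^ 2) ≠ 0 := by positivity
  field_simp

lemma hyp_boost1D (A C T D a : ℝ) (hA : 0 < A) (hC : C ^ 2 < A ^ 2) (hT : 0 < T)
    (hT2 : T ^ 2 = A ^ 2 - C ^ 2) :
    ∫ v : ℝ, Real.exp (-(A * Real.sqrt (1 + a ^ 2 + v ^ 2) - D - C * v)) /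
        Real.sqrt (1 + a ^ 2 + v ^ 2)
      = ∫ v : ℝ, Real.exp (-(T * Real.sqrt (1 + a ^ 2 + v ^ 2) - D)) /
          Real.sqrt (1 + a ^ 2 + v ^ 2) := by
  set σ : ℝ → ℝ := fun v => Real.sqrt (1 + a ^ 2 + v ^ 2) with hσdef
  show (∫ v : ℝ, Real.exp (-(A * σ v - D - C * v)) / σ v)
      = ∫ v : ℝ, Real.exp (-(T * σ v - D)) / σ v
  have hσpos : ∀ v, 0 < σ v := fun v => Real.sqrt_pos.2 (by positivity)
  have hσ2 : ∀ v, σ v ^ 2 = 1 + a ^ 2 + v ^ 2 := fun v => Real.sq_sqrt (by positivity)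
  set h : ℝ → ℝ := fun v => (A * v + C * σ v) / T with hhdef
  set k : ℝ → ℝ := fun v => (A * v - C * σ v) / T with hkdef
  have hC' : (-C) ^ 2 < A ^ 2 := by simpa using hC
  have hT2' : T ^ 2 = A ^ 2 - (-C) ^ 2 := by simpa using hT2
  have hTne : T ≠ 0 := hT.ne'
  have key1 : ∀ v, σ (h v) = (A * σ v + C * v) / T := fun v =>
    hyp_sqrt_iden A C T a v hA hC hT hT2
  have key2 : ∀ v, σ (k v) = (A * σ v - C * v) / T := fun v => by
    have h1 := hyp_sqrt_iden A (-C) T a v hA hC' hT hT2'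
    simp only [neg_mul, ← sub_eq_add_neg] at h1
    exact h1
  have hleft : Function.LeftInverse k h := by
    intro v
    have h1 := key1 v
    simp only [hkdef, hhdef] at h1 ⊢
    rw [h1]
    field_simp
    linear_combination (-v) * hT2
  have hright : ∀ w, h (k w) = w := by
    intro w
    have h1 := key2 w
    simp only [hkdef, hhdef] at h1 ⊢
    rw [h1]
    field_simp
    linear_combination (-w) * hT2
  have hinj : Set.InjOn h Set.univ := hleft.injective.injOn
  have hsurj : h '' Set.univ = Set.univ := by
    rw [Set.image_univ, Set.range_eq_univ]
    exact fun w => ⟨k w, hright w⟩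
  have hderiv : ∀ v, HasDerivAt h ((A * 1 + C * (v / σ v)) / T) v := by
    intro v
    exact (((hasDerivAt_id v).const_mul A).add
      ((hyp_hasDerivAt_sqrt a v).const_mul C)).div_const T
  have hpos' : ∀ v, 0 < A * σ v + C * v := fun v => hyp_pos_aux A C a v hA hC
  have hd_eq : ∀ v, (A * 1 + C * (v / σ v)) / T = σ (h v) / σ v := by
    intro v
    rw [key1 v]
    have h3 : σ v ≠ 0 := (hσpos v).ne'
    field_simp
  have main := integral_image_eq_integral_abs_deriv_smul MeasurableSet.univ
      (fun v (_ : v ∈ Set.univ) => (hderiv v).hasDerivWithinAt) hinj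
      (fun w => Real.exp (-(A * σ w - D - C * w)) / σ w)
  rw [hsurj] at main
  simp only [Measure.restrict_univ] at main
  rw [main]
  apply integral_congr_ae
  filter_upwards with v
  have e1 : A * σ (h v) - C * h v = T * σ v := by
    rw [key1 v]
    simp only [hhdef]
    field_simp
    linear_combination (-(σ v)) * hT2
  rw [hd_eq v, abs_of_pos (div_pos (by rw [key1 v]; exact div_pos (hpos' v) hT) (hσpos v))]
  rw [smul_eq_mul]
  rw [show -(A * σ (h v) - D - C * h v) = -(T * σ v - D) by rw [← e1]; ring]
  have h2 := (hσpos (h v)).ne'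
  have h3 := (hσpos v).ne'
  field_simp

lemma hyp_integrable_exp_neg_abs {δ : ℝ} (hδ : 0 < δ) :
    Integrable (fun u : ℝ => Real.exp (-(δ * |u|))) := by
  have hIoi : IntegrableOn (fun u : ℝ => Real.exp (-(δ * |u|))) (Ioi 0) := by
    refine (exp_neg_integrableOn_Ioi 0 hδ).congr_fun (fun x hx => ?_) measurableSet_Ioi
    simp [abs_of_pos (by exact hx : (0:ℝ) < x), neg_mul]
  have hIic : IntegrableOn (fun u : ℝ => Real.exp (-(δ * |u|))) (Iic 0) := by
    rw [← Measure.map_neg_eq_self (volume : Measure ℝ)]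
    have m : MeasurableEmbedding fun x : ℝ => -x := (Homeomorph.neg ℝ).measurableEmbedding
    rw [m.integrableOn_map_iff]
    simp_rw [Function.comp_def, abs_neg, neg_preimage, neg_Iic, neg_zero]
    exact (integrableOn_Ici_iff_integrableOn_Ioi).mpr hIoi
  have := hIic.union hIoi
  rwa [Iic_union_Ioi, integrableOn_univ] at this

lemma hyp_S_cont : Continuous fun x : ℝ × ℝ => Real.sqrt (1 + x.1 ^ 2 + x.2 ^ 2) :=
  Real.continuous_sqrt.comp (by fun_prop)

lemma hyp_integrable (A B C : ℝ) (h : Real.sqrt (B ^ 2 + C ^ 2) < A) :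
    Integrable (fun x : ℝ × ℝ =>
      Real.exp (-(A * Real.sqrt (1 + x.1 ^ 2 + x.2 ^ 2) - B * x.1 - C * x.2)) /
        Real.sqrt (1 + x.1 ^ 2 + x.2 ^ 2)) := by
  set R := Real.sqrt (B ^ 2 + C ^ 2) with hRdef
  have hR0 : 0 ≤ R := Real.sqrt_nonneg _
  have hR2 : R ^ 2 = B ^ 2 + C ^ 2 := Real.sq_sqrt (by positivity)
  set δ := (A - R) / 2 with hδdef
  have hδ : 0 < δ := by simp only [hδdef]; linarith
  have hmaj : Integrable (fun x : ℝ × ℝ => Real.exp (-(δ * |x.1|)) * Real.exp (-(δ * |x.2|))) := by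
    rw [Measure.volume_eq_prod]
    exact (hyp_integrable_exp_neg_abs hδ).mul_prod (hyp_integrable_exp_neg_abs hδ)
  have hcont : Continuous (fun x : ℝ × ℝ =>
      Real.exp (-(A * Real.sqrt (1 + x.1 ^ 2 + x.2 ^ 2) - B * x.1 - C * x.2)) /
        Real.sqrt (1 + x.1 ^ 2 + x.2 ^ 2)) := by
    apply Continuous.div
    · exact Real.continuous_exp.comp (by fun_prop)
    · exact hyp_S_cont
    · intro x
      exact (Real.sqrt_pos.2 (by positivity)).ne'
  refine hmaj.mono hcont.aestronglyMeasurable ?_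
  filter_upwards with x
  set S := Real.sqrt (1 + x.1 ^ 2 + x.2 ^ 2) with hSdef
  have hS2 : S ^ 2 = 1 + x.1 ^ 2 + x.2 ^ 2 := Real.sq_sqrt (by positivity)
  have hS1 : 1 ≤ S := by
    rw [hSdef]
    have := Real.sqrt_le_sqrt (show (1:ℝ) ≤ 1 + x.1 ^ 2 + x.2 ^ 2 by nlinarith [sq_nonneg x.1, sq_nonneg x.2])
    simpa using this
  have hSpos : 0 < S := lt_of_lt_of_le one_pos hS1
  have habs1 : |x.1| ≤ S := by
    have h1 : x.1 ^ 2 ≤ S ^ 2 := by nlinarith [sq_nonneg x.2]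
    have := Real.sqrt_le_sqrt h1
    rwa [Real.sqrt_sq_eq_abs, Real.sqrt_sq hSpos.le] at this
  have habs2 : |x.2| ≤ S := by
    have h1 : x.2 ^ 2 ≤ S ^ 2 := by nlinarith [sq_nonneg x.1]
    have := Real.sqrt_le_sqrt h1
    rwa [Real.sqrt_sq_eq_abs, Real.sqrt_sq hSpos.le] at this
  -- Cauchy-Schwarz style bound
  have hcs : B * x.1 + C * x.2 ≤ R * S := by
    have h1 : (B * x.1 + C * x.2) ^ 2 ≤ (B ^ 2 + C ^ 2) * (x.1 ^ 2 + x.2 ^ 2) := by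
      nlinarith [sq_nonneg (B * x.2 - C * x.1)]
    have h2 : (B * x.1 + C * x.2) ^ 2 ≤ (R * S) ^ 2 := by nlinarith [sq_nonneg x.1, sq_nonneg x.2]
    have h3 := Real.sqrt_le_sqrt h2
    rw [Real.sqrt_sq_eq_abs, Real.sqrt_sq (by positivity : (0:ℝ) ≤ R * S)] at h3
    exact le_trans (le_abs_self _) h3
  have hexp : δ * |x.1| + δ * |x.2| ≤ A * S - B * x.1 - C * x.2 := by
    have h4 : (A - R) * S ≤ A * S - B * x.1 - C * x.2 := by nlinarith
    have h5 : δ * |x.1| + δ * |x.2| ≤ (A - R) * S := by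
      have : |x.1| + |x.2| ≤ 2 * S := by linarith
      calc δ * |x.1| + δ * |x.2| = δ * (|x.1| + |x.2|) := by ring
        _ ≤ δ * (2 * S) := by
            apply mul_le_mul_of_nonneg_left this hδ.le
        _ = (A - R) * S := by rw [hδdef]; ring
    linarith
  rw [Real.norm_eq_abs, Real.norm_eq_abs]
  have hf_nonneg : 0 ≤ Real.exp (-(A * S - B * x.1 - C * x.2)) / S := by positivity
  rw [abs_of_nonneg hf_nonneg, abs_of_nonneg (by positivity)]
  calc Real.exp (-(A * S - B * x.1 - C * x.2)) / S
      ≤ Real.exp (-(A * S - B * x.1 - C * x.2)) / 1 := by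
        apply div_le_div_of_nonneg_left (Real.exp_nonneg _) one_pos hS1
    _ = Real.exp (-(A * S - B * x.1 - C * x.2)) := by rw [div_one]
    _ ≤ Real.exp (-(δ * |x.1| + δ * |x.2|)) := by
        apply Real.exp_le_exp.2; linarith
    _ = Real.exp (-(δ * |x.1|)) * Real.exp (-(δ * |x.2|)) := by
        rw [← Real.exp_add]; ring_nf

lemma hyp_boost2 (A B C : ℝ) (h : Real.sqrt (B ^ 2 + C ^ 2) < A) :
    ∫ x : ℝ × ℝ,
        Real.exp (-(A * Real.sqrt (1 + x.1 ^ 2 + x.2 ^ 2) - B * x.1 - C * x.2)) /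
          Real.sqrt (1 + x.1 ^ 2 + x.2 ^ 2)
      = ∫ x : ℝ × ℝ,
          Real.exp (-(Real.sqrt (A ^ 2 - C ^ 2) * Real.sqrt (1 + x.1 ^ 2 + x.2 ^ 2) - B * x.1)) /
            Real.sqrt (1 + x.1 ^ 2 + x.2 ^ 2) := by
  have hR0 : 0 ≤ Real.sqrt (B ^ 2 + C ^ 2) := Real.sqrt_nonneg _
  have hA : 0 < A := lt_of_le_of_lt hR0 h
  have hBC : B ^ 2 + C ^ 2 < A ^ 2 := by
    nlinarith [Real.sq_sqrt (show (0:ℝ) ≤ B ^ 2 + C ^ 2 by positivity)]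
  set T := Real.sqrt (A ^ 2 - C ^ 2) with hTdef
  have hT : 0 < T := Real.sqrt_pos.2 (by nlinarith [sq_nonneg B])
  have hT2 : T ^ 2 = A ^ 2 - C ^ 2 := Real.sq_sqrt (by nlinarith [sq_nonneg B])
  have hC2 : C ^ 2 < A ^ 2 := by nlinarith [sq_nonneg B]
  have hint1 := hyp_integrable A B C h
  have hint2 : Integrable (fun x : ℝ × ℝ =>
      Real.exp (-(T * Real.sqrt (1 + x.1 ^ 2 + x.2 ^ 2) - B * x.1)) /
        Real.sqrt (1 + x.1 ^ 2 + x.2 ^ 2)) := by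
    have hBT : Real.sqrt (B ^ 2 + 0 ^ 2) < T := by
      have h1 : B ^ 2 + 0 ^ 2 < T ^ 2 := by rw [hT2]; nlinarith
      have := Real.sqrt_lt_sqrt (by positivity) h1
      rwa [Real.sqrt_sq hT.le] at this
    have := hyp_integrable T B 0 hBT
    simpa using this
  rw [Measure.volume_eq_prod] at hint1 hint2 ⊢
  rw [integral_prod _ hint1, integral_prod _ hint2]
  apply integral_congr_ae
  filter_upwards with a
  have := hyp_boost1D A C T (B * a) a hA hC2 hT hT2
  simpa using this

lemma hyp_swap (T B : ℝ) :
    ∫ x : ℝ × ℝ,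
        Real.exp (-(T * Real.sqrt (1 + x.1 ^ 2 + x.2 ^ 2) - B * x.1)) /
          Real.sqrt (1 + x.1 ^ 2 + x.2 ^ 2)
      = ∫ x : ℝ × ℝ,
          Real.exp (-(T * Real.sqrt (1 + x.1 ^ 2 + x.2 ^ 2) - B * x.2)) /
            Real.sqrt (1 + x.1 ^ 2 + x.2 ^ 2) := by
  have hmp : MeasurePreserving (Prod.swap : ℝ × ℝ → ℝ × ℝ)
      ((volume : Measure ℝ).prod volume) ((volume : Measure ℝ).prod volume) :=
    Measure.measurePreserving_swap
  have hswap := hmp.integral_comp (MeasurableEquiv.prodComm (α := ℝ) (β := ℝ)).measurableEmbedding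
      (fun y : ℝ × ℝ => Real.exp (-(T * Real.sqrt (1 + y.1 ^ 2 + y.2 ^ 2) - B * y.1)) /
        Real.sqrt (1 + y.1 ^ 2 + y.2 ^ 2))
  rw [Measure.volume_eq_prod, ← hswap]
  apply integral_congr_ae
  filter_upwards with x
  have harg : 1 + x.2 ^ 2 + x.1 ^ 2 = 1 + x.1 ^ 2 + x.2 ^ 2 := by ring
  simp only [Prod.fst_swap, Prod.snd_swap]
  rw [harg]

lemma hyp_radial_1D (T : ℝ) (hT : 0 < T) :
    ∫ r in Ioi (0:ℝ), r * Real.exp (-(T * Real.sqrt (1 + r ^ 2))) / Real.sqrt (1 + r ^ 2)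
      = Real.exp (-T) / T := by
  set u : ℝ → ℝ := fun r => Real.sqrt (1 + r ^ 2) with hudef
  have hupos : ∀ r, 0 < u r := fun r => Real.sqrt_pos.2 (by positivity)
  have hu2 : ∀ r, u r ^ 2 = 1 + r ^ 2 := fun r => Real.sq_sqrt (by positivity)
  have huderiv : ∀ r, HasDerivAt u (r / u r) r := by
    intro r
    have := hyp_hasDerivAt_sqrt 0 r
    simpa using this
  have hle : ∀ r : ℝ, r ≤ u r := by
    intro r
    refine le_trans (le_abs_self r) ?_
    rw [← Real.sqrt_sq_eq_abs]
    exact Real.sqrt_le_sqrt (by nlinarith)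
  set F : ℝ → ℝ := fun r => -Real.exp (-(T * u r)) / T with hFdef
  have hder : ∀ r, HasDerivAt F (r * Real.exp (-(T * u r)) / u r) r := by
    intro r
    have h1 := (((huderiv r).const_mul T).neg).exp
    have h2 := (h1.neg).div_const T
    refine h2.congr_deriv ?_
    have := (hupos r).ne'
    have := hT.ne'
    simp only [Pi.neg_apply]
    field_simp
  have hint : IntegrableOn (fun r => r * Real.exp (-(T * u r)) / u r) (Ioi (0:ℝ)) := by
    have hmaj := exp_neg_integrableOn_Ioi 0 hT
    refine Integrable.mono hmaj ?_ ?_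
    · apply Continuous.aestronglyMeasurable
      apply Continuous.div
      · exact continuous_id.mul (Real.continuous_exp.comp (by fun_prop))
      · exact Real.continuous_sqrt.comp (by fun_prop)
      · exact fun r => (hupos r).ne'
    · rw [ae_restrict_iff' measurableSet_Ioi]
      filter_upwards with r hr
      have hr0 : 0 < r := hr
      have h1 : 0 ≤ r * Real.exp (-(T * u r)) / u r := by positivity
      rw [Real.norm_eq_abs, Real.norm_eq_abs, abs_of_nonneg h1,
        abs_of_nonneg (Real.exp_nonneg _)]
      have h2 : Real.exp (-(T * u r)) ≤ Real.exp (-T * r) := by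
        apply Real.exp_le_exp.2
        have := hle r
        nlinarith
      calc r * Real.exp (-(T * u r)) / u r
          ≤ u r * Real.exp (-(T * u r)) / u r := by
            gcongr
            exact hle r
        _ = Real.exp (-(T * u r)) := by field_simp [(hupos r).ne']
        _ ≤ Real.exp (-T * r) := h2
  have htend : Tendsto F atTop (nhds 0) := by
    have h1 : Tendsto u atTop atTop :=
      tendsto_atTop_mono hle tendsto_id
    have h2 : Tendsto (fun r => -(T * u r)) atTop atBot := by
      exact tendsto_neg_atTop_atBot.comp (h1.const_mul_atTop hT)
    have h3 : Tendsto (fun r => Real.exp (-(T * u r))) atTop (nhds 0) :=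
      Real.tendsto_exp_atBot.comp h2
    have h4 := (h3.neg).div_const T
    simpa using h4
  have hcont : ContinuousWithinAt F (Ici 0) 0 := (hder 0).continuousAt.continuousWithinAt
  have := integral_Ioi_of_hasDerivAt_of_tendsto hcont (fun r _ => hder r) hint htend
  rw [this]
  have hu0 : u 0 = 1 := by simp [hudef]
  simp [hFdef, hu0]
  ring

lemma hyp_radial (T : ℝ) (hT : 0 < T) :
    ∫ x : ℝ × ℝ,
        Real.exp (-(T * Real.sqrt (1 + x.1 ^ 2 + x.2 ^ 2))) /
          Real.sqrt (1 + x.1 ^ 2 + x.2 ^ 2)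
      = 2 * Real.pi * Real.exp (-T) / T := by
  rw [← integral_comp_polarCoord_symm]
  have hps : ∀ p : ℝ × ℝ, 1 + (polarCoord.symm p).1 ^ 2 + (polarCoord.symm p).2 ^ 2
      = 1 + p.1 ^ 2 := by
    intro p
    rw [polarCoord_symm_apply]
    have := Real.sin_sq_add_cos_sq p.2
    ring_nf
    nlinarith [Real.sin_sq_add_cos_sq p.2]
  have hstep : ∀ p : ℝ × ℝ, p.1 • (Real.exp (-(T * Real.sqrt (1 + (polarCoord.symm p).1 ^ 2 +
      (polarCoord.symm p).2 ^ 2))) / Real.sqrt (1 + (polarCoord.symm p).1 ^ 2 +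
      (polarCoord.symm p).2 ^ 2))
      = p.1 * Real.exp (-(T * Real.sqrt (1 + p.1 ^ 2))) / Real.sqrt (1 + p.1 ^ 2) := by
    intro p
    rw [hps p, smul_eq_mul, mul_div_assoc]
  rw [show polarCoord.target = Ioi (0:ℝ) ×ˢ Ioo (-Real.pi) Real.pi from rfl]
  rw [setIntegral_congr_fun (by measurability) (fun p _ => hstep p)]
  have hprod : ∫ p : ℝ × ℝ in Ioi (0:ℝ) ×ˢ Ioo (-Real.pi) Real.pi,
      p.1 * Real.exp (-(T * Real.sqrt (1 + p.1 ^ 2))) / Real.sqrt (1 + p.1 ^ 2)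
      = (∫ r in Ioi (0:ℝ), r * Real.exp (-(T * Real.sqrt (1 + r ^ 2))) / Real.sqrt (1 + r ^ 2)) *
        ∫ θ in Ioo (-Real.pi) Real.pi, (1:ℝ) := by
    rw [Measure.volume_eq_prod, ← Measure.prod_restrict]
    have := integral_prod_mul (μ := volume.restrict (Ioi (0:ℝ)))
      (ν := volume.restrict (Ioo (-Real.pi) Real.pi))
      (fun r : ℝ => r * Real.exp (-(T * Real.sqrt (1 + r ^ 2))) / Real.sqrt (1 + r ^ 2))
      (fun _ : ℝ => (1:ℝ))
    simpa using this
  rw [hprod, hyp_radial_1D T hT]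
  have harea : ∫ θ in Ioo (-Real.pi) Real.pi, (1:ℝ) = 2 * Real.pi := by
    rw [setIntegral_const, Real.volume_real_Ioo, smul_eq_mul, mul_one,
      max_eq_left (by linarith [Real.pi_pos] : (0:ℝ) ≤ Real.pi - -Real.pi)]
    ring
  rw [harea]
  ring


/-- normalization of the 2D hyperboloid distribution: for
θ₀ > √(θ₁²+θ₂²) and |θ| = √(θ₀²−θ₁²−θ₂²), the unnormalized density integrates
over ℝ² to 2π e^{−|θ|}/|θ|. -/
theorem hyperboloid2_normalization (θ₀ θ₁ θ₂ : ℝ)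
    (hθ : Real.sqrt (θ₁ ^ 2 + θ₂ ^ 2) < θ₀) :
    ∫ x : ℝ × ℝ,
        Real.exp (-(θ₀ * Real.sqrt (1 + x.1 ^ 2 + x.2 ^ 2) - θ₁ * x.1 - θ₂ * x.2)) /
          Real.sqrt (1 + x.1 ^ 2 + x.2 ^ 2) =
      2 * Real.pi * Real.exp (-Real.sqrt (θ₀ ^ 2 - θ₁ ^ 2 - θ₂ ^ 2)) /
        Real.sqrt (θ₀ ^ 2 - θ₁ ^ 2 - θ₂ ^ 2) := by
  have h0 : 0 ≤ Real.sqrt (θ₁ ^ 2 + θ₂ ^ 2) := Real.sqrt_nonneg _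
  have hA : 0 < θ₀ := lt_of_le_of_lt h0 hθ
  have hsum : θ₁ ^ 2 + θ₂ ^ 2 < θ₀ ^ 2 := by
    nlinarith [Real.sq_sqrt (show (0:ℝ) ≤ θ₁ ^ 2 + θ₂ ^ 2 by positivity)]
  have hT1pos : 0 < Real.sqrt (θ₀ ^ 2 - θ₂ ^ 2) :=
    Real.sqrt_pos.2 (by nlinarith [sq_nonneg θ₁])
  have hT1sq : Real.sqrt (θ₀ ^ 2 - θ₂ ^ 2) ^ 2 = θ₀ ^ 2 - θ₂ ^ 2 :=
    Real.sq_sqrt (by nlinarith [sq_nonneg θ₁])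
  rw [hyp_boost2 θ₀ θ₁ θ₂ hθ]
  rw [hyp_swap (Real.sqrt (θ₀ ^ 2 - θ₂ ^ 2)) θ₁]
  have hcond : Real.sqrt (0 ^ 2 + θ₁ ^ 2) < Real.sqrt (θ₀ ^ 2 - θ₂ ^ 2) := by
    have h1 : (0:ℝ) ^ 2 + θ₁ ^ 2 < Real.sqrt (θ₀ ^ 2 - θ₂ ^ 2) ^ 2 := by
      rw [hT1sq]; nlinarith
    have := Real.sqrt_lt_sqrt (by positivity) h1
    rwa [Real.sqrt_sq hT1pos.le] at this
  have h3 := hyp_boost2 (Real.sqrt (θ₀ ^ 2 - θ₂ ^ 2)) 0 θ₁ hcond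
  simp only [zero_mul, sub_zero] at h3
  rw [h3]
  have hTT : Real.sqrt (Real.sqrt (θ₀ ^ 2 - θ₂ ^ 2) ^ 2 - θ₁ ^ 2)
      = Real.sqrt (θ₀ ^ 2 - θ₁ ^ 2 - θ₂ ^ 2) := by
    rw [hT1sq]; ring_nf
  rw [hTT]
  exact hyp_radial _ (Real.sqrt_pos.2 (by nlinarith))
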